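/- For all positive integers i and b with 2 ≤ b ≤ 3i + 5, there exists a rational convex polygon P ⊂ ℝ² of denominator 3 that is pseudointegral, has exactly i lattice points in its interior, and has exactly b lattice points on its boundary. In fact, one may take P = conv{(i,0), (0,1/3), (−2,−1), (b−4,−1), (i + (2/3)(b−5), −2/3)}. -/

import Mathlib

open Set Pointwise

/-- The set of lattice points of the plane. -/
def latticePts : Set (ℝ × ℝ) := {p | ∃ m n : ℤ, p = ((m : ℝ), (n : ℝ))}

/-- The coercion of a rational point of the plane to a real point. -/
def qpt (v : ℚ × ℚ) : ℝ × ℝ := ((v.1 : ℝ), (v.2 : ℝ))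

/-- The Ehrhart function of a set `P ⊆ ℝ²`:  `t ↦ #(tP ∩ ℤ²)`. -/
noncomputable def ehr (P : Set (ℝ × ℝ)) (t : ℕ) : ℕ :=
  (((t : ℝ) • P) ∩ latticePts).ncard

/-- A set `P ⊆ ℝ²` is pseudointegral (a PIP) if its Ehrhart function agrees with
a polynomial at all positive integers. -/
def IsPIP (P : Set (ℝ × ℝ)) : Prop :=
  ∃ c : Polynomial ℚ, ∀ t : ℕ, 0 < t → (ehr P t : ℚ) = c.eval (t : ℚ)

/-- A rational triangle: the convex hull of three non-collinear rational points. -/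
def IsRatTriangle (T : Set (ℝ × ℝ)) : Prop :=
  ∃ p q r : ℚ × ℚ, ¬ Collinear ℝ ({qpt p, qpt q, qpt r} : Set (ℝ × ℝ)) ∧
    T = convexHull ℝ {qpt p, qpt q, qpt r}

/-- A rational convex polygon: the convex hull of a finite set of rational
points, with nonempty interior in ℝ². -/
def IsRatPolygon (P : Set (ℝ × ℝ)) : Prop :=
  ∃ V : Finset (ℚ × ℚ), P = convexHull ℝ (qpt '' (V : Set (ℚ × ℚ))) ∧
    (interior P).Nonempty

/-- `P` has denominator `d`: `d` is the least positive integer `k` such that the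
vertices (extreme points) of `kP` are all lattice points. -/
def HasDenom (P : Set (ℝ × ℝ)) (d : ℕ) : Prop :=
  IsLeast {k : ℕ | 0 < k ∧ Set.extremePoints ℝ ((k : ℝ) • P) ⊆ latticePts} d

namespace S10

/-! ### Integer arithmetic: row counts and their sum -/

def mf (i b t y : ℤ) : ℤ :=
  min (min (i*t - 3*i*y) (i*t - (b-5)*y)) ((3*i-2)*t + (3*i+2-b)*y)

lemma Ico_succ_insert (a c : ℤ) (h : a ≤ c) :
    Finset.Ico a (c+1) = insert c (Finset.Ico a c) := by
  ext x; simp [Finset.mem_Ico]; omega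

lemma sum_Ico_succ (f : ℤ → ℤ) (a c : ℤ) (h : a ≤ c) :
    ∑ y ∈ Finset.Ico a (c+1), f y = (∑ y ∈ Finset.Ico a c, f y) + f c := by
  rw [Ico_succ_insert a c h, Finset.sum_insert (by simp)]
  ring

lemma sum_Ico_split (f : ℤ → ℤ) (a c d : ℤ) (h1 : a ≤ c) (h2 : c ≤ d) :
    ∑ y ∈ Finset.Ico a d, f y
      = (∑ y ∈ Finset.Ico a c, f y) + (∑ y ∈ Finset.Ico c d, f y) := by
  rw [← Finset.Ico_union_Ico_eq_Ico h1 h2,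
    Finset.sum_union (by
      simp only [Finset.disjoint_left, Finset.mem_Ico]
      omega)]

lemma sum_Ico_linear_nat (α β a : ℤ) : ∀ n : ℕ,
    2 * ∑ y ∈ Finset.Ico a (a + n), (α + β * y) = (n : ℤ) * (2*α + β*(a+(a+n)-1)) := by
  intro n
  induction n with
  | zero => simp
  | succ n ih =>
    have h : a ≤ a + (n:ℤ) := by omega
    have h2 : a + ((n:ℕ)+1 : ℕ) = (a + (n:ℤ)) + 1 := by push_cast; ring
    rw [h2, sum_Ico_succ _ _ _ h, mul_add, ih]
    push_cast; ring

lemma sum_Ico_linear (α β a c : ℤ) (hac : a ≤ c) :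
    2 * ∑ y ∈ Finset.Ico a c, (α + β * y) = (c - a) * (2*α + β*(a+c-1)) := by
  obtain ⟨n, rfl⟩ : ∃ n : ℕ, c = a + n := ⟨(c - a).toNat, by omega⟩
  rw [sum_Ico_linear_nat]; ring

lemma sum_Ico_par_nat (t a : ℤ) : ∀ n : ℕ,
    ∑ y ∈ Finset.Ico a (a + n), (t + y) % 2 = (a + n + t)/2 - (a + t)/2 := by
  intro n
  induction n with
  | zero => simp
  | succ n ih =>
    have h : a ≤ a + (n:ℤ) := by omega
    have h2 : a + ((n:ℕ)+1 : ℕ) = (a + (n:ℤ)) + 1 := by push_cast; ring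
    rw [h2, sum_Ico_succ _ _ _ h, ih]
    omega

lemma sum_Ico_par (t a c : ℤ) (hac : a ≤ c) :
    ∑ y ∈ Finset.Ico a c, (t + y) % 2 = (c + t)/2 - (a + t)/2 := by
  obtain ⟨n, rfl⟩ : ∃ n : ℕ, c = a + n := ⟨(c - a).toNat, by omega⟩
  rw [sum_Ico_par_nat]

section Core
variable {i b t : ℤ}

lemma core2 (hi : 1 ≤ i) (hb2 : 2 ≤ b) (hb : b ≤ 3*i+5) (ht : 1 ≤ t) :
    4 * ∑ y ∈ Finset.Ico (-t) (t/3 + 1), (mf i b t y + (t - 3*y)/2 + 1)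
      = 2*((2*i+b-2)*t^2 + b*t + 2) := by
  obtain ⟨q, r, hqr, hr⟩ : ∃ q r : ℤ, t = 3*q+r ∧ (r = 0 ∨ r = 1 ∨ r = 2) :=
    ⟨t/3, t%3, by omega, by omega⟩
  have hq : t/3 = q := by omega
  obtain ⟨w, hw3, hw3'⟩ : ∃ w : ℤ, 3*w ≤ 2*t ∧ 2*t < 3*w + 3 := ⟨2*t/3, by omega, by omega⟩
  have hq0 : 0 ≤ q := by omega
  have hw0 : 0 ≤ w := by omega
  have hwt : w ≤ t := by omega
  rw [hq]
  -- pointwise evaluation of mf on the three ranges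
  have mfa : ∀ y ∈ Finset.Ico (0:ℤ) (q+1), mf i b t y = (i*t) + (-(3*i))*y := by
    intro y hy
    simp only [Finset.mem_Ico] at hy
    have hy0 : 0 ≤ y := hy.1
    have hy1 : 3*y ≤ t := by omega
    have k1 : 0 ≤ (3*i+5-b)*y := mul_nonneg (by omega) hy0
    have k2 : 0 ≤ (i-1)*t := mul_nonneg (by omega) (by omega)
    have k3 : 0 ≤ (6*i+2-b)*y := mul_nonneg (by omega) hy0
    have h1 : i*t - 3*i*y ≤ i*t - (b-5)*y := by nlinarith
    have h2 : i*t - 3*i*y ≤ (3*i-2)*t + (3*i+2-b)*y := by nlinarith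
    unfold mf
    rw [min_eq_left h1, min_eq_left h2]
    ring
  have mfb : ∀ y ∈ Finset.Ico (-w) (0:ℤ), mf i b t y = (i*t) + (-(b-5))*y := by
    intro y hy
    simp only [Finset.mem_Ico] at hy
    have hy0 : y ≤ 0 := by omega
    have hy1 : 0 ≤ 2*t + 3*y := by omega
    have k1 : 0 ≤ (3*i+5-b)*(-y) := mul_nonneg (by omega) (by omega)
    have k2 : 0 ≤ (i-1)*(2*t+3*y) := mul_nonneg (by omega) hy1
    have h1 : i*t - (b-5)*y ≤ i*t - 3*i*y := by nlinarith
    have h2 : i*t - (b-5)*y ≤ (3*i-2)*t + (3*i+2-b)*y := by nlinarith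
    unfold mf
    rw [min_eq_right h1, min_eq_left h2]
    ring
  have mfc : ∀ y ∈ Finset.Ico (-t) (-w), mf i b t y = ((3*i-2)*t) + (3*i+2-b)*y := by
    intro y hy
    simp only [Finset.mem_Ico] at hy
    have hy1 : 2*t + 3*y ≤ -1 := by omega
    have k1 : 0 ≤ (i-1)*(-(2*t+3*y)) := mul_nonneg (by omega) (by omega)
    have k2 : (6*i+2-b)*(3*y) ≤ (6*i+2-b)*(-2*t-1) :=
      mul_le_mul_of_nonneg_left (by omega) (by omega)
    have k3 : 0 ≤ (6*i+10-2*b)*(t-1) := mul_nonneg (by omega) (by omega)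
    have h1 : (3*i-2)*t + (3*i+2-b)*y ≤ i*t - 3*i*y := by nlinarith
    have h2 : (3*i-2)*t + (3*i+2-b)*y ≤ i*t - (b-5)*y := by nlinarith
    unfold mf
    rw [min_eq_right (le_min h1 h2)]
  -- split summand
  have hsplit : ∑ y ∈ Finset.Ico (-t) (q+1), (mf i b t y + (t - 3*y)/2 + 1)
      = (∑ y ∈ Finset.Ico (-t) (q+1), mf i b t y)
        + (∑ y ∈ Finset.Ico (-t) (q+1), (t - 3*y)/2)
        + (q + 1 + t) := by
    rw [Finset.sum_add_distrib, Finset.sum_add_distrib, Finset.sum_const, Int.card_Ico]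
    simp only [nsmul_eq_mul, mul_one]
    rw [Int.toNat_of_nonneg (by omega)]
    ring_nf
  rw [hsplit]
  -- split the mf sum into three ranges
  have hmfsplit : ∑ y ∈ Finset.Ico (-t) (q+1), mf i b t y
      = (∑ y ∈ Finset.Ico (-t) (-w), mf i b t y)
        + (∑ y ∈ Finset.Ico (-w) 0, mf i b t y)
        + (∑ y ∈ Finset.Ico 0 (q+1), mf i b t y) := by
    rw [sum_Ico_split (fun y => mf i b t y) (-t) 0 (q+1) (by omega) (by omega),
        sum_Ico_split (fun y => mf i b t y) (-t) (-w) 0 (by omega) (by omega)]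
  rw [hmfsplit, Finset.sum_congr rfl mfa, Finset.sum_congr rfl mfb, Finset.sum_congr rfl mfc]
  -- closed forms
  have ea := sum_Ico_linear (i*t) (-(3*i)) 0 (q+1) (by omega)
  have eb := sum_Ico_linear (i*t) (-(b-5)) (-w) 0 (by omega)
  have ec := sum_Ico_linear ((3*i-2)*t) (3*i+2-b) (-t) (-w) (by omega)
  -- the div sum
  have ed2 : 2 * ∑ y ∈ Finset.Ico (-t) (q+1), (t - 3*y)/2
      = (∑ y ∈ Finset.Ico (-t) (q+1), (t + (-3)*y))
        - (∑ y ∈ Finset.Ico (-t) (q+1), (t + y) % 2) := by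
    rw [Finset.mul_sum, ← Finset.sum_sub_distrib]
    exact Finset.sum_congr rfl (fun y _ => by omega)
  have elin2 := sum_Ico_linear t (-3) (-t) (q+1) (by omega)
  have epar := sum_Ico_par t (-t) (q+1) (by omega)
  -- now case on r
  rcases hr with rfl | rfl | rfl
  · have hww : w = 2*q := by omega
    have hcnt : (q + 1 + t)/2 - (-t + t)/2 = 2*q := by omega
    rw [hcnt] at epar
    subst hqr hww
    linear_combination 2*ea + 2*eb + 2*ec + 2*ed2 + elin2 - 2*epar
  · have hww : w = 2*q := by omega
    have hcnt : (q + 1 + t)/2 - (-t + t)/2 = 2*q+1 := by omega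
    rw [hcnt] at epar
    subst hqr hww
    linear_combination 2*ea + 2*eb + 2*ec + 2*ed2 + elin2 - 2*epar
  · have hww : w = 2*q+1 := by omega
    have hcnt : (q + 1 + t)/2 - (-t + t)/2 = 2*q+1 := by omega
    rw [hcnt] at epar
    subst hqr hww
    linear_combination 2*ea + 2*eb + 2*ec + 2*ed2 + elin2 - 2*epar

lemma core (hi : 1 ≤ i) (hb2 : 2 ≤ b) (hb : b ≤ 3*i+5) (ht : 1 ≤ t) :
    2 * ∑ y ∈ Finset.Ico (-t) (t/3 + 1), (mf i b t y + (t - 3*y)/2 + 1)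
      = (2*i+b-2)*t^2 + b*t + 2 := by
  have := core2 hi hb2 hb ht
  omega

end Core

/-! ### The polygon: V- and H-descriptions -/

def Hs (i b : ℤ) (t : ℝ) : Set (ℝ × ℝ) :=
  {p | -t ≤ p.2 ∧ -2*p.1 + 3*p.2 ≤ t ∧ p.1 + 3*i*p.2 ≤ i*t ∧
       p.1 + (b-5)*p.2 ≤ i*t ∧ p.1 - (3*i+2-b)*p.2 ≤ (3*i-2)*t}

def Hso (i b : ℤ) (t : ℝ) : Set (ℝ × ℝ) :=
  {p | -t < p.2 ∧ -2*p.1 + 3*p.2 < t ∧ p.1 + 3*i*p.2 < i*t ∧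
       p.1 + (b-5)*p.2 < i*t ∧ p.1 - (3*i+2-b)*p.2 < (3*i-2)*t}

def Vt (i b : ℤ) (t : ℝ) : Set (ℝ × ℝ) :=
  {((i:ℝ)*t, 0), (0, t/3), (-2*t, -t), (((b:ℝ)-4)*t, -t),
   (((i:ℝ) + 2/3*((b:ℝ)-5))*t, -(2/3)*t)}

def Sh (al be ga : ℝ) : Set (ℝ × ℝ) := {p | al*p.1 + be*p.2 ≤ ga}

def Sho (al be ga : ℝ) : Set (ℝ × ℝ) := {p | al*p.1 + be*p.2 < ga}

lemma lin2 (al be : ℝ) : IsLinearMap ℝ (fun p : ℝ×ℝ => al*p.1 + be*p.2) :=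
  ⟨fun p q => by simp only [Prod.fst_add, Prod.snd_add]; ring,
   fun c p => by simp only [Prod.smul_fst, Prod.smul_snd, smul_eq_mul]; ring⟩

lemma convex_Sh (al be ga : ℝ) : Convex ℝ (Sh al be ga) :=
  convex_halfSpace_le (lin2 al be) ga

lemma interior_Sh (al be ga : ℝ) (h : al ≠ 0 ∨ be ≠ 0) :
    interior (Sh al be ga) = Sho al be ga := by
  set f : ℝ×ℝ →L[ℝ] ℝ :=
    al • (ContinuousLinearMap.fst ℝ ℝ ℝ) + be • (ContinuousLinearMap.snd ℝ ℝ ℝ) with hf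
  have hfapp : ∀ p : ℝ×ℝ, f p = al*p.1 + be*p.2 := by
    intro p
    simp [hf, ContinuousLinearMap.add_apply, ContinuousLinearMap.smul_apply, smul_eq_mul]
  have hsurj : Function.Surjective f := by
    intro c
    rcases h with h | h
    · exact ⟨(c/al, 0), by rw [hfapp]; field_simp; ring⟩
    · exact ⟨(0, c/be), by rw [hfapp]; field_simp; ring⟩
  have h1 : Sh al be ga = f ⁻¹' (Set.Iic ga) := by
    ext p; simp [Sh, hfapp]
  have h2 : Sho al be ga = f ⁻¹' (Set.Iio ga) := by
    ext p; simp [Sho, hfapp]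
  rw [h1, h2, f.interior_preimage hsurj, interior_Iic]

lemma Hs_eq (i b : ℤ) (t : ℝ) :
    Hs i b t = Sh 0 (-1) t ∩ Sh (-2) 3 t ∩ Sh 1 (3*i) (i*t) ∩ Sh 1 ((b:ℝ)-5) (i*t)
      ∩ Sh 1 (-(3*(i:ℝ)+2-b)) ((3*i-2)*t) := by
  ext p
  simp only [Hs, Sh, mem_setOf_eq, mem_inter_iff]
  constructor
  · rintro ⟨h1,h2,h3,h4,h5⟩
    refine ⟨⟨⟨⟨by linarith, by linarith⟩, by linarith⟩, by linarith⟩, by linarith⟩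
  · rintro ⟨⟨⟨⟨h1,h2⟩,h3⟩,h4⟩,h5⟩
    refine ⟨by linarith, by linarith, by linarith, by linarith, by linarith⟩

lemma Hso_eq (i b : ℤ) (t : ℝ) :
    Hso i b t = Sho 0 (-1) t ∩ Sho (-2) 3 t ∩ Sho 1 (3*i) (i*t) ∩ Sho 1 ((b:ℝ)-5) (i*t)
      ∩ Sho 1 (-(3*(i:ℝ)+2-b)) ((3*i-2)*t) := by
  ext p
  simp only [Hso, Sho, mem_setOf_eq, mem_inter_iff]
  constructor
  · rintro ⟨h1,h2,h3,h4,h5⟩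
    refine ⟨⟨⟨⟨by linarith, by linarith⟩, by linarith⟩, by linarith⟩, by linarith⟩
  · rintro ⟨⟨⟨⟨h1,h2⟩,h3⟩,h4⟩,h5⟩
    refine ⟨by linarith, by linarith, by linarith, by linarith, by linarith⟩

lemma convex_Hs (i b : ℤ) (t : ℝ) : Convex ℝ (Hs i b t) := by
  rw [Hs_eq]
  exact ((((convex_Sh _ _ _).inter (convex_Sh _ _ _)).inter (convex_Sh _ _ _)).inter
    (convex_Sh _ _ _)).inter (convex_Sh _ _ _)

lemma interior_Hs (i b : ℤ) (t : ℝ) : interior (Hs i b t) = Hso i b t := by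
  rw [Hs_eq, Hso_eq, interior_inter, interior_inter, interior_inter, interior_inter,
    interior_Sh 0 (-1) t (Or.inr (by norm_num)),
    interior_Sh (-2) 3 t (Or.inl (by norm_num)),
    interior_Sh 1 (3*(i:ℝ)) _ (Or.inl (by norm_num)),
    interior_Sh 1 ((b:ℝ)-5) _ (Or.inl (by norm_num)),
    interior_Sh 1 (-(3*(i:ℝ)+2-(b:ℝ))) _ (Or.inl (by norm_num))]

lemma smul_Vt (i b : ℤ) (k : ℝ) : k • Vt i b 1 = Vt i b k := by
  simp only [Vt, Set.smul_set_insert, Set.smul_set_singleton, Prod.smul_mk, smul_eq_mul,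
    mul_one, mul_zero, mul_neg]
  norm_num [mul_comm, mul_one_div]

lemma Vt_subset_Hs {i b : ℤ} (hi : 1 ≤ i) (hb2 : 2 ≤ b) (hb : b ≤ 3*i+5)
    {t : ℝ} (ht : 0 < t) : Vt i b t ⊆ Hs i b t := by
  have hi' : (1:ℝ) ≤ (i:ℝ) := by exact_mod_cast hi
  have hb2' : (2:ℝ) ≤ (b:ℝ) := by exact_mod_cast hb2
  have hb' : (b:ℝ) ≤ 3*(i:ℝ)+5 := by exact_mod_cast hb
  have k1 : 0 ≤ ((i:ℝ)-1)*t := mul_nonneg (by linarith) ht.le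
  have k2 : 0 ≤ ((b:ℝ)-2)*t := mul_nonneg (by linarith) ht.le
  have k3 : 0 ≤ (3*(i:ℝ)+5-(b:ℝ))*t := mul_nonneg (by linarith) ht.le
  intro p hp
  simp only [Vt, mem_insert_iff, mem_singleton_iff] at hp
  rcases hp with rfl|rfl|rfl|rfl|rfl <;>
    refine ⟨?_,?_,?_,?_,?_⟩ <;> simp only [Hs] <;> nlinarith [ht.le, k1, k2, k3]

lemma mem_segment_horiz {lx rx x y : ℝ} (h1 : lx ≤ x) (h2 : x ≤ rx) :
    ((x, y) : ℝ × ℝ) ∈ segment ℝ (lx, y) (rx, y) := by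
  rcases eq_or_lt_of_le (h1.trans h2) with h | h
  · have hx : x = lx := le_antisymm (h ▸ h2) h1
    have : ((x, y) : ℝ × ℝ) = (lx, y) := by rw [hx]
    rw [this]
    exact left_mem_segment ℝ _ _
  · have hd : rx - lx ≠ 0 := sub_ne_zero.2 (ne_of_gt h)
    refine ⟨(rx - x)/(rx - lx), (x - lx)/(rx - lx),
      div_nonneg (by linarith) (by linarith), div_nonneg (by linarith) (by linarith),
      by field_simp; ring, ?_⟩
    apply Prod.ext <;> simp only [Prod.smul_mk, smul_eq_mul, Prod.mk_add_mk] <;>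
      field_simp <;> try ring

lemma hull_eq {i b : ℤ} (hi : 1 ≤ i) (hb2 : 2 ≤ b) (hb : b ≤ 3*i+5)
    {t : ℝ} (ht : 0 < t) : convexHull ℝ (Vt i b t) = Hs i b t := by
  have hi' : (1:ℝ) ≤ (i:ℝ) := by exact_mod_cast hi
  have hb2' : (2:ℝ) ≤ (b:ℝ) := by exact_mod_cast hb2
  have hb' : (b:ℝ) ≤ 3*(i:ℝ)+5 := by exact_mod_cast hb
  apply Set.Subset.antisymm
  · exact convexHull_min (Vt_subset_Hs hi hb2 hb ht) (convex_Hs i b t)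
  · rintro ⟨x, y⟩ hp
    obtain ⟨h1, h2, h3, h4, h5⟩ := hp
    simp only at h1 h2 h3 h4 h5
    have hfac : (0:ℝ) < 2*(i:ℝ)+1 := by linarith
    have hkey : (2*(i:ℝ)+1)*(3*y) ≤ (2*(i:ℝ)+1)*t := by nlinarith [h2, h3]
    have hy3 : 3*y ≤ t := le_of_mul_le_mul_left hkey hfac
    have hLx : (3*y - t)/2 ≤ x := by linarith
    have hull_conv := convex_convexHull ℝ (Vt i b t)
    have hA : ((i:ℝ)*t, (0:ℝ)) ∈ convexHull ℝ (Vt i b t) :=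
      subset_convexHull ℝ _ (by simp [Vt])
    have hB : ((0:ℝ), t/3) ∈ convexHull ℝ (Vt i b t) :=
      subset_convexHull ℝ _ (by simp [Vt])
    have hC : ((-2*t:ℝ), -t) ∈ convexHull ℝ (Vt i b t) :=
      subset_convexHull ℝ _ (by simp [Vt])
    have hD : ((((b:ℝ)-4)*t : ℝ), -t) ∈ convexHull ℝ (Vt i b t) :=
      subset_convexHull ℝ _ (by simp [Vt])
    have hE : ((((i:ℝ) + 2/3*((b:ℝ)-5))*t : ℝ), -(2/3)*t) ∈ convexHull ℝ (Vt i b t) :=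
      subset_convexHull ℝ _ (by simp [Vt])
    have ht' : t ≠ 0 := ne_of_gt ht
    have hL : (((3*y - t)/2, y) : ℝ×ℝ) ∈ convexHull ℝ (Vt i b t) := by
      refine hull_conv.segment_subset hB hC ⟨(3*y+3*t)/(4*t), (t-3*y)/(4*t),
        div_nonneg (by linarith) (by linarith), div_nonneg (by linarith) (by linarith),
        by field_simp; try ring, ?_⟩
      apply Prod.ext <;> simp only [Prod.smul_mk, smul_eq_mul, Prod.mk_add_mk] <;>
        field_simp <;> try ring
    rcases le_total 0 y with hy0 | hy0
    · have hR : (((i:ℝ)*t - 3*(i:ℝ)*y, y) : ℝ×ℝ) ∈ convexHull ℝ (Vt i b t) := by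
        refine hull_conv.segment_subset hA hB ⟨(t-3*y)/t, (3*y)/t,
          div_nonneg (by linarith) ht.le, div_nonneg (by linarith) ht.le,
          by field_simp; ring, ?_⟩
        apply Prod.ext <;> simp only [Prod.smul_mk, smul_eq_mul, Prod.mk_add_mk] <;>
          field_simp <;> try ring
      exact hull_conv.segment_subset hL hR (mem_segment_horiz hLx (by linarith))
    · rcases le_total (-(2*t)) (3*y) with hy2 | hy2
      · have hR : (((i:ℝ)*t - ((b:ℝ)-5)*y, y) : ℝ×ℝ) ∈ convexHull ℝ (Vt i b t) := by
          refine hull_conv.segment_subset hA hE ⟨(2*t+3*y)/(2*t), (-(3*y))/(2*t),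
            div_nonneg (by linarith) (by linarith), div_nonneg (by linarith) (by linarith),
            by field_simp; try ring, ?_⟩
          apply Prod.ext <;> simp only [Prod.smul_mk, smul_eq_mul, Prod.mk_add_mk] <;>
            field_simp <;> try ring
        exact hull_conv.segment_subset hL hR (mem_segment_horiz hLx (by linarith))
      · have hR : (((3*(i:ℝ)-2)*t + (3*(i:ℝ)+2-(b:ℝ))*y, y) : ℝ×ℝ)
            ∈ convexHull ℝ (Vt i b t) := by
          refine hull_conv.segment_subset hE hD ⟨(3*t+3*y)/t, (-(3*y)-2*t)/t,
            div_nonneg (by linarith) ht.le, div_nonneg (by linarith) ht.le,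
            by field_simp; try ring, ?_⟩
          apply Prod.ext <;> simp only [Prod.smul_mk, smul_eq_mul, Prod.mk_add_mk] <;>
            field_simp <;> try ring
        exact hull_conv.segment_subset hL hR (mem_segment_horiz hLx (by linarith))

/-! ### Lattice point counting -/

def e2 (v : ℤ × ℤ) : ℝ × ℝ := ((v.1 : ℝ), (v.2 : ℝ))

lemma e2_inj : Function.Injective e2 := by
  rintro ⟨a1,a2⟩ ⟨b1,b2⟩ h
  simp only [e2, Prod.mk.injEq] at h
  exact Prod.ext (by exact_mod_cast h.1) (by exact_mod_cast h.2)

lemma inter_lattice_eq (S : Set (ℝ×ℝ)) (F : Finset (ℤ×ℤ))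
    (h : ∀ v : ℤ×ℤ, e2 v ∈ S ↔ v ∈ F) : S ∩ latticePts = e2 '' ↑F := by
  ext p
  constructor
  · rintro ⟨hS, m, n, rfl⟩
    exact ⟨(m,n), (h (m,n)).1 hS, rfl⟩
  · rintro ⟨v, hv, rfl⟩
    exact ⟨(h v).2 (by exact_mod_cast hv), v.1, v.2, rfl⟩

lemma ncard_inter (S : Set (ℝ×ℝ)) (F : Finset (ℤ×ℤ))
    (h : ∀ v : ℤ×ℤ, e2 v ∈ S ↔ v ∈ F) : (S ∩ latticePts).ncard = F.card := by
  rw [inter_lattice_eq S F h, Set.ncard_image_of_injective _ e2_inj, Set.ncard_coe_finset]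

noncomputable def Ft (i b t : ℤ) : Finset (ℤ×ℤ) :=
  (Finset.Ico (-t) (t/3 + 1)).biUnion
    (fun y => (Finset.Icc (-((t-3*y)/2)) (mf i b t y)).image (fun x => (x, y)))

lemma mem_Ft (i b t : ℤ) (v : ℤ×ℤ) :
    v ∈ Ft i b t ↔ (-t ≤ v.2 ∧ v.2 < t/3+1 ∧ -((t-3*v.2)/2) ≤ v.1 ∧ v.1 ≤ mf i b t v.2) := by
  obtain ⟨m, n⟩ := v
  simp only [Ft, Finset.mem_biUnion, Finset.mem_Ico, Finset.mem_image, Finset.mem_Icc,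
    Prod.mk.injEq]
  constructor
  · rintro ⟨y, ⟨hy1, hy2⟩, x, ⟨hx1, hx2⟩, rfl, rfl⟩
    exact ⟨hy1, hy2, hx1, hx2⟩
  · rintro ⟨h1, h2, h3, h4⟩
    exact ⟨n, ⟨h1, h2⟩, m, ⟨h3, h4⟩, rfl, rfl⟩

section WithHyp
variable {i b t : ℤ}

lemma rowpos (hi : 1 ≤ i) (hb2 : 2 ≤ b) (hb : b ≤ 3*i+5) (ht : 1 ≤ t) :
    ∀ y ∈ Finset.Ico (-t) (t/3+1), 0 ≤ mf i b t y + (t-3*y)/2 + 1 := by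
  intro y hy
  simp only [Finset.mem_Ico] at hy
  have hty : 0 ≤ t - 3*y := by omega
  have hyt : -t ≤ y := hy.1
  have h1 : 3*y - t ≤ 2*(i*t - 3*i*y) := by
    nlinarith [mul_nonneg (show (0:ℤ) ≤ 2*i+1 by omega) hty]
  have h2 : 3*y - t ≤ 2*(i*t - (b-5)*y) := by
    rcases le_total 0 y with hy0 | hy0
    · nlinarith [mul_nonneg (show (0:ℤ) ≤ 6*i+10-2*b by omega) hy0,
        mul_nonneg (show (0:ℤ) ≤ 2*i+1 by omega) hty]
    · rcases le_total (2*b) 7 with hb3 | hb3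
      · nlinarith [mul_nonneg (show (0:ℤ) ≤ 7-2*b by omega) (show 0 ≤ t + y by omega),
          mul_nonneg (show (0:ℤ) ≤ 2*i+2*b-6 by omega) (show (0:ℤ) ≤ t by omega)]
      · nlinarith [mul_nonneg (show (0:ℤ) ≤ 2*b-7 by omega) (show 0 ≤ -y by omega),
          mul_nonneg (show (0:ℤ) ≤ 2*i+1 by omega) (show (0:ℤ) ≤ t by omega)]
  have h3 : 3*y - t ≤ 2*((3*i-2)*t + (3*i+2-b)*y) := by
    rcases le_total 0 y with hy0 | hy0
    · rcases le_total (2*b) (6*i+1) with hbb | hbb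
      · nlinarith [mul_nonneg (show (0:ℤ) ≤ 6*i+1-2*b by omega) hy0,
          mul_nonneg (show (0:ℤ) ≤ 6*i-3 by omega) (show (0:ℤ) ≤ t by omega)]
      · nlinarith [mul_le_mul_of_nonneg_left (show 3*y ≤ t by omega)
            (show (0:ℤ) ≤ 2*b-6*i-1 by omega),
          mul_nonneg (show (0:ℤ) ≤ 24*i-8-2*b by omega) (show (0:ℤ) ≤ t by omega)]
    · rcases le_total (2*b) (6*i+1) with hbb | hbb
      · nlinarith [mul_le_mul_of_nonneg_left (show -t ≤ y by omega)
            (show (0:ℤ) ≤ 6*i+1-2*b by omega),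
          mul_nonneg (show (0:ℤ) ≤ 2*b-4 by omega) (show (0:ℤ) ≤ t by omega)]
      · nlinarith [mul_nonneg (show (0:ℤ) ≤ 2*b-6*i-1 by omega) (show 0 ≤ -y by omega),
          mul_nonneg (show (0:ℤ) ≤ 6*i-3 by omega) (show (0:ℤ) ≤ t by omega)]
  have hm : 3*y - t ≤ 2 * mf i b t y := by
    unfold mf
    rcases le_total (i*t - 3*i*y) (i*t - (b-5)*y) with hc | hc <;>
      rcases le_total (min (i*t - 3*i*y) (i*t - (b-5)*y)) ((3*i-2)*t + (3*i+2-b)*y) with hd | hd <;>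
      simp [min_eq_left, min_eq_right, hc, hd] <;> omega
  omega

lemma card_Ft (hi : 1 ≤ i) (hb2 : 2 ≤ b) (hb : b ≤ 3*i+5) (ht : 1 ≤ t) :
    ((Ft i b t).card : ℤ) = ∑ y ∈ Finset.Ico (-t) (t/3+1), (mf i b t y + (t-3*y)/2 + 1) := by
  have hdisj : ∀ y1 ∈ Finset.Ico (-t) (t/3+1), ∀ y2 ∈ Finset.Ico (-t) (t/3+1), y1 ≠ y2 →
      Disjoint ((Finset.Icc (-((t-3*y1)/2)) (mf i b t y1)).image (fun x => (x, y1)))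
        ((Finset.Icc (-((t-3*y2)/2)) (mf i b t y2)).image (fun x => (x, y2))) := by
    intro y1 _ y2 _ hne
    simp only [Finset.disjoint_left, Finset.mem_image]
    rintro v ⟨x, _, rfl⟩ ⟨x', _, h⟩
    exact hne ((congrArg Prod.snd h).symm)
  rw [Ft, Finset.card_biUnion hdisj]
  push_cast
  refine Finset.sum_congr rfl ?_
  intro y hy
  rw [Finset.card_image_of_injective _ (fun a b h => by simpa using h),
    Int.card_Icc]
  have := rowpos hi hb2 hb ht y hy
  omega

lemma e2_mem_Hs_iff (v : ℤ×ℤ) :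
    e2 v ∈ Hs i b (t:ℝ) ↔ (-t ≤ v.2 ∧ -2*v.1 + 3*v.2 ≤ t ∧ v.1 + 3*i*v.2 ≤ i*t ∧
      v.1 + (b-5)*v.2 ≤ i*t ∧ v.1 - (3*i+2-b)*v.2 ≤ (3*i-2)*t) := by
  obtain ⟨m, n⟩ := v
  simp only [Hs, e2, mem_setOf_eq]
  constructor
  · rintro ⟨h1, h2, h3, h4, h5⟩
    exact ⟨by exact_mod_cast h1, by exact_mod_cast h2, by exact_mod_cast h3,
      by exact_mod_cast h4, by exact_mod_cast h5⟩
  · rintro ⟨h1, h2, h3, h4, h5⟩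
    exact ⟨by exact_mod_cast h1, by exact_mod_cast h2, by exact_mod_cast h3,
      by exact_mod_cast h4, by exact_mod_cast h5⟩

lemma e2_mem_Hso_iff (v : ℤ×ℤ) :
    e2 v ∈ Hso i b (t:ℝ) ↔ (-t < v.2 ∧ -2*v.1 + 3*v.2 < t ∧ v.1 + 3*i*v.2 < i*t ∧
      v.1 + (b-5)*v.2 < i*t ∧ v.1 - (3*i+2-b)*v.2 < (3*i-2)*t) := by
  obtain ⟨m, n⟩ := v
  simp only [Hso, e2, mem_setOf_eq]
  constructor
  · rintro ⟨h1, h2, h3, h4, h5⟩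
    exact ⟨by exact_mod_cast h1, by exact_mod_cast h2, by exact_mod_cast h3,
      by exact_mod_cast h4, by exact_mod_cast h5⟩
  · rintro ⟨h1, h2, h3, h4, h5⟩
    exact ⟨by exact_mod_cast h1, by exact_mod_cast h2, by exact_mod_cast h3,
      by exact_mod_cast h4, by exact_mod_cast h5⟩

lemma Hs_iff_Ft (hi : 1 ≤ i) (v : ℤ×ℤ) :
    e2 v ∈ Hs i b (t:ℝ) ↔ v ∈ Ft i b t := by
  rw [e2_mem_Hs_iff, mem_Ft]
  obtain ⟨m, n⟩ := v
  simp only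
  constructor
  · rintro ⟨h1, h2, h3, h4, h5⟩
    have hkey : (2*i+1)*(3*n) ≤ (2*i+1)*t := by nlinarith
    have h3n : 3*n ≤ t := le_of_mul_le_mul_left hkey (by omega)
    refine ⟨h1, by omega, by omega, le_min (le_min (by omega) (by omega)) (by omega)⟩
  · rintro ⟨h1, h2, h3, h4⟩
    have c1 := h4.trans (min_le_of_left_le (min_le_left _ _))
    have c2 := h4.trans (min_le_of_left_le (min_le_right _ _))
    have c3 := h4.trans (min_le_right _ _)
    exact ⟨h1, by omega, by omega, by omega, by omega⟩

lemma count_Hs (hi : 1 ≤ i) (hb2 : 2 ≤ b) (hb : b ≤ 3*i+5) (ht : 1 ≤ t) :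
    2 * (((Hs i b (t:ℝ)) ∩ latticePts).ncard : ℤ) = (2*i+b-2)*t^2 + b*t + 2 := by
  have h1 : ((Hs i b (t:ℝ)) ∩ latticePts).ncard = (Ft i b t).card :=
    ncard_inter _ _ (fun v => Hs_iff_Ft hi v)
  rw [h1, card_Ft hi hb2 hb ht]
  exact core hi hb2 hb ht

noncomputable def FI (i : ℤ) : Finset (ℤ×ℤ) := Finset.Icc 0 (i-1) ×ˢ {(0:ℤ)}

lemma Hso_iff_FI (hi : 1 ≤ i) (v : ℤ×ℤ) :
    e2 v ∈ Hso i b ((1:ℤ):ℝ) ↔ v ∈ FI i := by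
  rw [e2_mem_Hso_iff]
  obtain ⟨m, n⟩ := v
  simp only [FI, Finset.mem_product, Finset.mem_Icc, Finset.mem_singleton]
  constructor
  · rintro ⟨h1, h2, h3, h4, h5⟩
    have hkey : (2*i+1)*(3*n) < (2*i+1)*1 := by nlinarith
    have h3n : 3*n < 1 := lt_of_mul_lt_mul_left hkey (by omega)
    have hn : n = 0 := by omega
    subst hn
    refine ⟨⟨by omega, by omega⟩, rfl⟩
  · rintro ⟨⟨h1, h2⟩, rfl⟩
    refine ⟨by omega, by omega, by nlinarith, by nlinarith, by nlinarith⟩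

/-! ### The extreme top vertex -/

lemma y_le_of_mem (hi : 1 ≤ i) {s : ℝ} {p : ℝ×ℝ} (hp : p ∈ Hs i b s) : 3*p.2 ≤ s := by
  obtain ⟨h1, h2, h3, h4, h5⟩ := hp
  have hi' : (1:ℝ) ≤ (i:ℝ) := by exact_mod_cast hi
  have hkey : (2*(i:ℝ)+1)*(3*p.2) ≤ (2*(i:ℝ)+1)*s := by nlinarith
  exact le_of_mul_le_mul_left hkey (by linarith)

lemma top_extreme (hi : 1 ≤ i) (hb2 : 2 ≤ b) (hb : b ≤ 3*i+5) {k : ℝ} (hk : 0 < k) :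
    ((0:ℝ), k/3) ∈ Set.extremePoints ℝ (Hs i b k) := by
  have hi' : (1:ℝ) ≤ (i:ℝ) := by exact_mod_cast hi
  have hb2' : (2:ℝ) ≤ (b:ℝ) := by exact_mod_cast hb2
  have hb' : (b:ℝ) ≤ 3*(i:ℝ)+5 := by exact_mod_cast hb
  have hmem : ((0:ℝ), k/3) ∈ Hs i b k := by
    refine ⟨by linarith, by linarith, by nlinarith, ?_, ?_⟩
    · show (0:ℝ) + ((b:ℝ)-5)*(k/3) ≤ (i:ℝ)*k
      nlinarith [mul_nonneg (show (0:ℝ) ≤ 3*(i:ℝ)+5-(b:ℝ) by linarith) hk.le]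
    · show (0:ℝ) - (3*(i:ℝ)+2-(b:ℝ))*(k/3) ≤ (3*(i:ℝ)-2)*k
      nlinarith [mul_nonneg (show (0:ℝ) ≤ 12*(i:ℝ)-4-(b:ℝ) by linarith) hk.le]
  rw [mem_extremePoints]
  refine ⟨hmem, ?_⟩
  intro x1 hx1 x2 hx2 hseg
  obtain ⟨a, c, ha, hc, hac, habc⟩ := hseg
  have hsnd : a * x1.2 + c * x2.2 = k/3 := congrArg Prod.snd habc
  have hfst : a * x1.1 + c * x2.1 = 0 := congrArg Prod.fst habc
  have hy1 : x1.2 ≤ k/3 := by linarith [y_le_of_mem hi hx1]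
  have hy2 : x2.2 ≤ k/3 := by linarith [y_le_of_mem hi hx2]
  have e1 : 0 ≤ a*(k/3 - x1.2) := mul_nonneg ha.le (by linarith)
  have e2 : 0 ≤ c*(k/3 - x2.2) := mul_nonneg hc.le (by linarith)
  have hsum : a*(k/3 - x1.2) + c*(k/3 - x2.2) = 0 := by
    linear_combination (k/3) * hac - hsnd
  have hz1 : a*(k/3 - x1.2) = 0 := by linarith
  have hz2 : c*(k/3 - x2.2) = 0 := by linarith
  have hy1' : x1.2 = k/3 := by
    rcases mul_eq_zero.1 hz1 with h | h
    · exact absurd h (ne_of_gt ha)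
    · linarith
  have hy2' : x2.2 = k/3 := by
    rcases mul_eq_zero.1 hz2 with h | h
    · exact absurd h (ne_of_gt hc)
    · linarith
  have hx1a : 0 ≤ x1.1 := by
    have := hx1.2.1
    rw [hy1'] at this
    linarith
  have hx1b : x1.1 ≤ 0 := by
    have := hx1.2.2.1
    rw [hy1'] at this
    nlinarith
  have hx2a : 0 ≤ x2.1 := by
    have := hx2.2.1
    rw [hy2'] at this
    linarith
  have hx2b : x2.1 ≤ 0 := by
    have := hx2.2.2.1
    rw [hy2'] at this
    nlinarith
  constructor <;> [skip; skip] <;>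
  · apply Prod.ext <;> simp only
    · linarith
    · assumption

end WithHyp
end S10

/-- for all positive integers i, b with 2 ≤ b ≤ 3i + 5, the polygon
P = conv{(i,0), (0,1/3), (−2,−1), (b−4,−1), (i + (2/3)(b−5), −2/3)} is a rational
convex polygon of denominator 3 that is pseudointegral, with exactly i interior
and b boundary lattice points. -/
theorem stmt_10 (i b : ℕ) (hi : 0 < i) (hb2 : 2 ≤ b) (hb : b ≤ 3 * i + 5)
    (P : Set (ℝ × ℝ))
    (hP : P = convexHull ℝ
      ({((i : ℝ), 0), (0, 1/3), (-2, -1), ((b : ℝ) - 4, -1),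
        ((i : ℝ) + (2/3) * ((b : ℝ) - 5), -(2/3))} : Set (ℝ × ℝ))) :
    IsRatPolygon P ∧ HasDenom P 3 ∧ IsPIP P ∧
      (interior P ∩ latticePts).ncard = i ∧
      (frontier P ∩ latticePts).ncard = b := by
  have hiz : (1:ℤ) ≤ (i:ℤ) := by exact_mod_cast hi
  have hb2z : (2:ℤ) ≤ (b:ℤ) := by exact_mod_cast hb2
  have hbz : (b:ℤ) ≤ 3*(i:ℤ)+5 := by exact_mod_cast hb
  -- identification of the vertex set
  have hV1 : S10.Vt (i:ℤ) (b:ℤ) 1 =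
      ({((i : ℝ), 0), (0, 1/3), (-2, -1), ((b : ℝ) - 4, -1),
        ((i : ℝ) + (2/3) * ((b : ℝ) - 5), -(2/3))} : Set (ℝ × ℝ)) := by
    unfold S10.Vt
    push_cast
    norm_num
  have hPV : P = convexHull ℝ (S10.Vt (i:ℤ) (b:ℤ) 1) := by rw [hP, hV1]
  have hPH : P = S10.Hs (i:ℤ) (b:ℤ) 1 := by
    rw [hPV, S10.hull_eq hiz hb2z hbz one_pos]
  have hsmulP : ∀ k : ℝ, k • P = convexHull ℝ (S10.Vt (i:ℤ) (b:ℤ) k) := by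
    intro k
    rw [hPV, ← convexHull_smul, S10.smul_Vt]
  have hsmulH : ∀ k : ℝ, 0 < k → k • P = S10.Hs (i:ℤ) (b:ℤ) k := by
    intro k hk
    rw [hsmulP k, S10.hull_eq hiz hb2z hbz hk]
  have hIntP : interior P = S10.Hso (i:ℤ) (b:ℤ) 1 := by
    rw [hPH, S10.interior_Hs]
  -- lattice point counts
  have hPL : (P ∩ latticePts).ncard = i + b := by
    have h := S10.count_Hs hiz hb2z hbz (le_refl 1)
    have h1 : (((1:ℤ)):ℝ) = (1:ℝ) := by norm_num
    rw [h1, ← hPH] at h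
    have : ((P ∩ latticePts).ncard : ℤ) = (i:ℤ) + (b:ℤ) := by nlinarith [h]
    exact_mod_cast this
  have hIL : (interior P ∩ latticePts).ncard = i := by
    have h1 : S10.Hso (i:ℤ) (b:ℤ) (1:ℝ) = S10.Hso (i:ℤ) (b:ℤ) (((1:ℤ)):ℝ) := by norm_num
    rw [hIntP, h1, S10.ncard_inter _ _ (S10.Hso_iff_FI hiz)]
    simp [S10.FI, Int.card_Icc]
  have hILfin : (interior P ∩ latticePts).Finite := by
    have h1 : S10.Hso (i:ℤ) (b:ℤ) (1:ℝ) = S10.Hso (i:ℤ) (b:ℤ) (((1:ℤ)):ℝ) := by norm_num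
    rw [hIntP, h1, S10.inter_lattice_eq _ _ (S10.Hso_iff_FI hiz)]
    exact (S10.FI (i:ℤ)).finite_toSet.image _
  have hclosed : IsClosed P := by
    rw [hPV]
    refine (Set.Finite.isCompact_convexHull ℝ ?_).isClosed
    unfold S10.Vt
    exact (((((Set.finite_singleton _).insert _).insert _).insert _).insert _)
  have hfr : frontier P ∩ latticePts = (P ∩ latticePts) \ (interior P ∩ latticePts) := by
    rw [frontier, hclosed.closure_eq]
    ext p
    constructor
    · rintro ⟨⟨hp1, hp2⟩, hl⟩
      exact ⟨⟨hp1, hl⟩, fun hc => hp2 hc.1⟩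
    · rintro ⟨⟨hp1, hl⟩, hn⟩
      exact ⟨⟨hp1, fun hc => hn ⟨hc, hl⟩⟩, hl⟩
  have hFL : (frontier P ∩ latticePts).ncard = b := by
    rw [hfr, Set.ncard_diff (Set.inter_subset_inter_left latticePts interior_subset) hILfin,
      hPL, hIL]
    omega
  -- interior is nonempty
  have hne : (interior P).Nonempty := by
    refine ⟨((0:ℝ), (0:ℝ)), ?_⟩
    rw [hIntP]
    have hi' : (1:ℝ) ≤ (i:ℝ) := by exact_mod_cast hiz
    refine ⟨by norm_num, by norm_num, by norm_num; nlinarith, by norm_num; nlinarith,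
      by norm_num; nlinarith⟩
  refine ⟨?_, ?_, ?_, hIL, hFL⟩
  · -- IsRatPolygon
    refine ⟨({((i:ℚ),0), (0,1/3), (-2,-1), ((b:ℚ)-4,-1),
      ((i:ℚ)+2/3*((b:ℚ)-5), -(2/3))} : Finset (ℚ×ℚ)), ?_, hne⟩
    rw [hP]
    congr 1
    simp only [Finset.coe_insert, Finset.coe_singleton, Set.image_insert_eq,
      Set.image_singleton, qpt]
    push_cast
    norm_num
  · -- HasDenom
    constructor
    · refine ⟨by norm_num, ?_⟩
      intro p hp
      have h3 : ((3:ℕ):ℝ) = (3:ℝ) := by norm_num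
      rw [h3, hsmulP 3] at hp
      have hp' := extremePoints_convexHull_subset hp
      simp only [S10.Vt, mem_insert_iff, mem_singleton_iff] at hp'
      rcases hp' with rfl|rfl|rfl|rfl|rfl
      · exact ⟨3*(i:ℤ), 0, Prod.ext_iff.mpr ⟨by push_cast; ring, by norm_num⟩⟩
      · exact ⟨0, 1, Prod.ext_iff.mpr ⟨by norm_num, by norm_num⟩⟩
      · exact ⟨-6, -3, Prod.ext_iff.mpr ⟨by norm_num, by norm_num⟩⟩
      · exact ⟨3*(b:ℤ)-12, -3, Prod.ext_iff.mpr ⟨by push_cast; ring, by norm_num⟩⟩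
      · exact ⟨3*(i:ℤ)+2*(b:ℤ)-10, -2, Prod.ext_iff.mpr ⟨by push_cast; ring, by norm_num⟩⟩
    · intro k hk
      by_contra hcon
      push_neg at hcon
      have hk12 : k = 1 ∨ k = 2 := by
        have := hk.1
        omega
      have hkpos : (0:ℝ) < (k:ℝ) := by exact_mod_cast hk.1
      have hex := S10.top_extreme hiz hb2z hbz hkpos
      rw [← hsmulH (k:ℝ) hkpos] at hex
      obtain ⟨m, n, heq⟩ := hk.2 hex
      have h2 : ((k:ℝ)/3) = (n:ℝ) := congrArg Prod.snd heq
      have h3 : (k:ℝ) = 3*(n:ℝ) := by linarith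
      have h4 : (k:ℤ) = 3*n := by exact_mod_cast h3
      omega
  · -- IsPIP
    refine ⟨Polynomial.C ((2*(i:ℚ)+(b:ℚ)-2)/2) * Polynomial.X^2
      + Polynomial.C ((b:ℚ)/2) * Polynomial.X + 1, ?_⟩
    intro t ht
    have htz : (1:ℤ) ≤ (t:ℤ) := by exact_mod_cast ht
    have hcount := S10.count_Hs hiz hb2z hbz htz
    have htpos : (0:ℝ) < ((t:ℕ):ℝ) := by exact_mod_cast ht
    have hsm : ((t:ℕ):ℝ) • P = S10.Hs (i:ℤ) (b:ℤ) ((((t:ℕ):ℤ)):ℝ) := by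
      rw [hsmulH ((t:ℕ):ℝ) htpos]
      norm_num
    have hZ : 2*((ehr P t):ℤ) = (2*(i:ℤ)+(b:ℤ)-2)*((t:ℕ):ℤ)^2 + (b:ℤ)*((t:ℕ):ℤ) + 2 := by
      simp only [ehr]
      rw [hsm]
      exact hcount
    have hQ : 2*((ehr P t):ℚ) = (2*(i:ℚ)+(b:ℚ)-2)*(t:ℚ)^2 + (b:ℚ)*(t:ℚ) + 2 := by
      exact_mod_cast hZ
    simp only [Polynomial.eval_add, Polynomial.eval_mul, Polynomial.eval_pow,
      Polynomial.eval_C, Polynomial.eval_X, Polynomial.eval_one]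
    linarith [hQ]
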